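/- Let H be a real separable Hilbert space, σ > 0, and let P = 𝒩(μ, C) be a Gaussian measure on H whose covariance operator C has eigenvalues (λⱼ) with corresponding orthonormal basis of eigenvectors (ψⱼ). Then for every x ∈ H, log ∫_H e^{-σ‖x−y‖²} dP(y) = − Σⱼ ( σ/(1 + 2σλⱼ) ) ⟨x − μ, ψⱼ⟩² − (1/2) Σⱼ log(1 + 2σλⱼ), where both series converge. Consequently, for n i.i.d. observations y₁,…,yₙ, the log kernel mean of the n-fold product measure with the Gaussian product kernel equals Σᵢ Σⱼ (−σ/(1+2σλⱼ)) ⟨yᵢ − μ, ψⱼ⟩² − (n/2) Σⱼ log(1 + 2σλⱼ). -/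

import Mathlib

open MeasureTheory Filter
open scoped RealInnerProductSpace NNReal

noncomputable section

/-- `P` is the Gaussian measure `𝒩(μ, C)` on a real Hilbert space: every one-dimensional
projection `y ↦ ⟪a, y⟫` pushes `P` forward to the real normal distribution
`N(⟪a, μ⟫, ⟪C a, a⟫)`. -/
def IsGaussian {H : Type*} [NormedAddCommGroup H] [InnerProductSpace ℝ H]
    [MeasurableSpace H] (P : Measure H) (μ : H) (C : H →L[ℝ] H) : Prop :=
  ∀ a : H, P.map (fun y => ⟪a, y⟫)
    = ProbabilityTheory.gaussianReal ⟪a, μ⟫ (⟪C a, a⟫).toNNReal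

open Complex Real
open scoped ENNReal Topology

lemma fourier_factor {β : ℝ} (hβ : 0 < β) (b : ℝ) :
    ∫ s : ℝ, Complex.exp (Complex.I * b * s) * Complex.exp (-(β : ℂ) * s ^ 2)
      = (Real.sqrt (π / β) : ℂ) * Complex.exp (-(b : ℂ) ^ 2 / (4 * β)) := by
  have h := fourierIntegral_gaussian (b := (β : ℂ)) (by simpa using hβ) (b : ℂ)
  rw [h]
  congr 1
  have h1 : ((π : ℂ) / β) = ((π / β : ℝ) : ℂ) := by push_cast; ring
  rw [h1, show ((1:ℂ)/2) = ((1/2:ℝ):ℂ) by norm_num,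
    ← Complex.ofReal_cpow (le_of_lt (div_pos Real.pi_pos hβ))]
  rw [Real.sqrt_eq_rpow]

lemma charGaussianReal (m : ℝ) (v : ℝ≥0) (t : ℝ) :
    ∫ z, Complex.exp (Complex.I * t * z) ∂(ProbabilityTheory.gaussianReal m v)
      = Complex.exp (Complex.I * t * m - v * t ^ 2 / 2) := by
  by_cases hv : v = 0
  · subst hv
    simp [integral_dirac]
  · rw [ProbabilityTheory.gaussianReal_of_var_ne_zero m hv]
    rw [show (ProbabilityTheory.gaussianPDF m v)
        = fun x => ((Real.toNNReal (ProbabilityTheory.gaussianPDFReal m v x) : ℝ≥0) : ℝ≥0∞)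
        from rfl]
    rw [integral_withDensity_eq_integral_smul
      ((ProbabilityTheory.measurable_gaussianPDFReal m v).real_toNNReal) _]
    have hv' : (0:ℝ) < (v:ℝ) := lt_of_le_of_ne (v.coe_nonneg) (by exact_mod_cast (Ne.symm hv))
    have hnn : ∀ x, (Real.toNNReal (ProbabilityTheory.gaussianPDFReal m v x) : ℝ)
        = ProbabilityTheory.gaussianPDFReal m v x :=
      fun x => Real.coe_toNNReal _ (ProbabilityTheory.gaussianPDFReal_nonneg m v x)
    have hsq : (0:ℝ) < Real.sqrt (2 * π * v) :=
      Real.sqrt_pos.2 (by positivity)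
    have step1 : ∀ x : ℝ, (Real.toNNReal (ProbabilityTheory.gaussianPDFReal m v x) : ℝ≥0)
          • Complex.exp (Complex.I * t * x)
        = ((Real.sqrt (2 * π * v))⁻¹ : ℝ)
            * (Complex.exp (Complex.I * t * ((x - m) + m))
              * Complex.exp (-((1:ℝ)/(2*v) : ℝ) * ((x - m):ℂ) ^ 2)) := by
      intro x
      rw [NNReal.smul_def, Complex.real_smul, hnn x, ProbabilityTheory.gaussianPDFReal]
      push_cast
      rw [mul_assoc, ← Complex.exp_add, ← Complex.exp_add]
      congr 2
      · ring
    simp_rw [step1]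
    rw [integral_const_mul]
    have step2 : ∫ x : ℝ, Complex.exp (Complex.I * t * ((x - m) + m))
          * Complex.exp (-((1:ℝ)/(2*v) : ℝ) * ((x - m):ℂ) ^ 2)
        = ∫ x : ℝ, Complex.exp (Complex.I * t * (x + m))
          * Complex.exp (-((1:ℝ)/(2*v) : ℝ) * (x:ℂ) ^ 2) := by
      rw [← integral_sub_right_eq_self (fun x : ℝ => Complex.exp (Complex.I * t * ((x:ℂ) + m))
          * Complex.exp (-((1:ℝ)/(2*v) : ℝ) * (x:ℂ) ^ 2)) m]
      norm_num
    rw [step2]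
    have step3 : ∀ x : ℝ, Complex.exp (Complex.I * t * (x + m))
          * Complex.exp (-((1:ℝ)/(2*v) : ℝ) * (x:ℂ) ^ 2)
        = Complex.exp (Complex.I * t * m)
          * (Complex.exp (Complex.I * t * x) * Complex.exp (-(((1:ℝ)/(2*v) : ℝ):ℂ) * (x:ℂ) ^ 2)) := by
      intro x
      rw [← Complex.exp_add, ← Complex.exp_add, ← Complex.exp_add]
      congr 1
      ring
    simp_rw [step3]
    rw [integral_const_mul, fourier_factor (by positivity) t]
    have harg : π / ((1:ℝ)/(2*v)) = 2 * π * v := by field_simp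
    rw [harg]
    have hvC : ((v:ℝ):ℂ) ≠ 0 := by exact_mod_cast ne_of_gt hv'
    have hexp : (-(t:ℂ)^2/(4 * (((1:ℝ)/(2*(v:ℝ)) : ℝ) : ℂ))) = -((v:ℝ):ℂ) * (t:ℂ)^2/2 := by
      push_cast
      field_simp
      ring
    rw [hexp]
    have hpull : ((Real.sqrt (2*π*(v:ℝ)) : ℝ) : ℂ) ≠ 0 := by exact_mod_cast ne_of_gt hsq
    rw [Complex.ofReal_inv, inv_mul_eq_iff_eq_mul₀ hpull, mul_left_comm]
    congr 1
    rw [← Complex.exp_add]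
    congr 1
    ring

lemma charP {H : Type*} [NormedAddCommGroup H] [InnerProductSpace ℝ H]
    [MeasurableSpace H] [BorelSpace H]
    (P : Measure H) (μ : H) (C : H →L[ℝ] H) (hP : IsGaussian P μ C) (a : H) (t : ℝ) :
    ∫ y, Complex.exp (Complex.I * t * ⟪a, y⟫) ∂P
      = Complex.exp (Complex.I * t * ⟪a, μ⟫
          - ((⟪C a, a⟫.toNNReal : ℝ) : ℂ) * t ^ 2 / 2) := by
  have hcont : Continuous fun y : H => ⟪a, y⟫ := continuous_const.inner continuous_id
  have h1 : ∫ y, Complex.exp (Complex.I * t * ⟪a, y⟫) ∂P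
      = ∫ z : ℝ, Complex.exp (Complex.I * t * z) ∂(P.map fun y => ⟪a, y⟫) := by
    rw [integral_map hcont.aemeasurable]
    exact (Complex.continuous_exp.comp (by continuity)).aestronglyMeasurable
  rw [h1, hP a, charGaussianReal]

lemma keyfin {H : Type*} [NormedAddCommGroup H] [InnerProductSpace ℝ H]
    [CompleteSpace H] [SecondCountableTopology H] [MeasurableSpace H] [BorelSpace H]
    (σ : ℝ) (hσ : 0 < σ) (P : Measure H) [IsProbabilityMeasure P]
    (μ : H) (C : H →L[ℝ] H) (hP : IsGaussian P μ C)
    (ψ : HilbertBasis ℕ ℝ H) (lam : ℕ → ℝ) (hlam : ∀ j, 0 ≤ lam j)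
    (heig : ∀ j, C (ψ j) = lam j • ψ j) (x : H) (N : ℕ) :
    ∫ y, Real.exp (-σ * ∑ j ∈ Finset.range N, ⟪x - y, (ψ j : H)⟫ ^ 2) ∂P
      = Real.exp (-(∑ j ∈ Finset.range N, σ / (1 + 2*σ*lam j) * ⟪x - μ, (ψ j : H)⟫^2)
        - (1/2) * ∑ j ∈ Finset.range N, Real.log (1 + 2*σ*lam j)) := by
  classical
  set K : ℝ := Real.sqrt (4*π*σ) with hKdef
  have hK : 0 < K := Real.sqrt_pos.2 (by positivity)
  set β : ℕ → ℝ := fun j => 1/(4*σ) + lam j / 2 with hβdef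
  have hβpos : ∀ j, 0 < β j := fun j => by
    have := hlam j; simp only [hβdef]; positivity
  set b : ℕ → ℝ := fun j => ⟪x - μ, (ψ j : H)⟫ with hbdef
  set asum : (Fin N → ℝ) → H := fun s => ∑ j : Fin N, s j • (ψ (j:ℕ) : H) with hasumdef
  set F : H → (Fin N → ℝ) → ℂ := fun y s =>
    Complex.exp (Complex.I * (⟪x - y, asum s⟫ : ℝ))
      * Complex.exp (-(((1:ℝ)/(4*σ) : ℝ) : ℂ) * ∑ j : Fin N, ((s j : ℝ) : ℂ)^2) with hFdef
  have hcont_asum : Continuous asum := by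
    apply continuous_finset_sum
    intro j _
    exact (continuous_apply j).smul continuous_const
  -- Step A
  have hA : ∀ y : H, ((Real.exp (-σ * ∑ j ∈ Finset.range N, ⟪x - y, (ψ j : H)⟫ ^ 2) : ℝ) : ℂ)
      = ((K⁻¹ : ℝ) : ℂ)^N * ∫ s : Fin N → ℝ, F y s := by
    intro y
    have single : ∀ cc : ℝ, ((Real.exp (-σ * cc^2) : ℝ) : ℂ)
        = ((K⁻¹ : ℝ) : ℂ) * ∫ s : ℝ, Complex.exp (Complex.I * cc * s)
            * Complex.exp (-((((1:ℝ)/(4*σ) : ℝ)) : ℂ) * s^2) := by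
      intro cc
      rw [fourier_factor (by positivity) cc]
      have h1 : π / ((1:ℝ)/(4*σ)) = 4*π*σ := by field_simp
      rw [h1, ← hKdef]
      have h2 : (-(cc:ℂ)^2 / (4 * ((((1:ℝ)/(4*σ) : ℝ)) : ℂ))) = ((-σ * cc^2 : ℝ) : ℂ) := by
        push_cast
        field_simp
      rw [h2, ← mul_assoc, ← Complex.ofReal_mul, inv_mul_cancel₀ (ne_of_gt hK),
        Complex.ofReal_one, one_mul, Complex.ofReal_exp]
    have hstep1 : ((Real.exp (-σ * ∑ j ∈ Finset.range N, ⟪x - y, (ψ j : H)⟫ ^ 2) : ℝ) : ℂ)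
        = ∏ j : Fin N, ((Real.exp (-σ * ⟪x - y, (ψ (j:ℕ) : H)⟫^2) : ℝ) : ℂ) := by
      rw [← Complex.ofReal_prod, ← Real.exp_sum, ← Finset.mul_sum,
        ← Fin.sum_univ_eq_sum_range (fun j => ⟪x - y, (ψ j : H)⟫^2) N]
    rw [hstep1]
    simp_rw [single]
    rw [Finset.prod_mul_distrib, Finset.prod_const, Finset.card_univ, Fintype.card_fin]
    congr 1
    rw [← integral_fintype_prod_eq_prod (μ := fun _ => volume)
      (f := fun (j : Fin N) (s : ℝ) => Complex.exp (Complex.I * (⟪x - y, (ψ (j:ℕ) : H)⟫ : ℝ) * s)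
        * Complex.exp (-((((1:ℝ)/(4*σ) : ℝ)) : ℂ) * s^2))]
    congr 1
    funext s
    rw [Finset.prod_mul_distrib, hFdef]
    congr 1
    · rw [← Complex.exp_sum]
      congr 1
      have hin : ⟪x - y, asum s⟫ = ∑ j : Fin N, s j * ⟪x - y, (ψ (j:ℕ) : H)⟫ := by
        simp [hasumdef, inner_sum, real_inner_smul_right]
      rw [hin]
      push_cast
      rw [Finset.mul_sum]
      apply Finset.sum_congr rfl
      intros
      ring
    · rw [← Complex.exp_sum, ← Finset.mul_sum]
  -- Step B : integrability for Fubini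
  have hgInt : Integrable (fun s : Fin N → ℝ => Real.exp (-((1:ℝ)/(4*σ)) * ∑ j : Fin N, (s j)^2))
      (volume : Measure (Fin N → ℝ)) := by
    have hrw : ∀ s : Fin N → ℝ, Real.exp (-((1:ℝ)/(4*σ)) * ∑ j : Fin N, (s j)^2)
        = ∏ j : Fin N, Real.exp (-((1:ℝ)/(4*σ)) * (s j)^2) := by
      intro s
      rw [← Real.exp_sum, ← Finset.mul_sum]
    simp_rw [hrw]
    exact Integrable.fintype_prod (f := fun (_ : Fin N) (t : ℝ) => Real.exp (-((1:ℝ)/(4*σ)) * t^2))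
      (fun i => integrable_exp_neg_mul_sq (by positivity))
  have hFmeas : Continuous (Function.uncurry F) := by
    have c1 : Continuous fun p : H × (Fin N → ℝ) => (⟪x - p.1, asum p.2⟫ : ℝ) :=
      Continuous.inner (continuous_const.sub continuous_fst) (hcont_asum.comp continuous_snd)
    have c2 : Continuous fun s : Fin N → ℝ => ∑ j : Fin N, ((s j : ℝ) : ℂ)^2 :=
      continuous_finset_sum _ fun j _ =>
        (Complex.continuous_ofReal.comp (continuous_apply j)).pow 2
    exact ((Complex.continuous_exp.comp
        (continuous_const.mul (Complex.continuous_ofReal.comp c1))).mul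
      (Complex.continuous_exp.comp (continuous_const.mul (c2.comp continuous_snd))))
  have hInt : Integrable (Function.uncurry F) (P.prod (volume : Measure (Fin N → ℝ))) := by
    apply Integrable.mono'
      (g := fun p : H × (Fin N → ℝ) => Real.exp (-((1:ℝ)/(4*σ)) * ∑ j : Fin N, (p.2 j)^2))
      ?_ hFmeas.aestronglyMeasurable ?_
    · have h1 : Integrable (fun p : H × (Fin N → ℝ) =>
          (1:ℝ) * Real.exp (-((1:ℝ)/(4*σ)) * ∑ j : Fin N, (p.2 j)^2)) (P.prod volume) :=
        (integrable_const (1:ℝ)).mul_prod hgInt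
      simpa using h1
    · filter_upwards with p
      rw [Function.uncurry, hFdef]
      rw [norm_mul]
      have hn1 : ‖Complex.exp (Complex.I * ((⟪x - p.1, asum p.2⟫ : ℝ) : ℂ))‖ = 1 := by
        rw [Complex.norm_exp]
        simp [Complex.mul_re]
      have hn2 : ‖Complex.exp (-((((1:ℝ)/(4*σ) : ℝ)) : ℂ) * ∑ j : Fin N, ((p.2 j : ℝ) : ℂ)^2)‖
          = Real.exp (-((1:ℝ)/(4*σ)) * ∑ j : Fin N, (p.2 j)^2) := by
        rw [Complex.norm_exp]
        have harg : (-((((1:ℝ)/(4*σ) : ℝ)) : ℂ) * ∑ j : Fin N, ((p.2 j : ℝ) : ℂ)^2)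
            = (((-((1:ℝ)/(4*σ)) * ∑ j : Fin N, (p.2 j)^2 : ℝ)) : ℂ) := by
          push_cast
          ring
        rw [harg, Complex.ofReal_re]
      rw [hn1, hn2, one_mul]
  -- Step C : inner integral
  have hC : ∀ s : Fin N → ℝ, ∫ y, F y s ∂P
      = ∏ j : Fin N, (Complex.exp (Complex.I * (b (j:ℕ) : ℝ) * (s j))
          * Complex.exp (-((β (j:ℕ) : ℝ) : ℂ) * (s j)^2)) := by
    intro s
    have horto : Orthonormal ℝ (fun j : Fin N => (ψ (j:ℕ) : H)) :=
      ψ.orthonormal.comp _ Fin.val_injective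
    have hax : ∀ z : H, (⟪asum s, z⟫ : ℝ) = ∑ j : Fin N, s j * ⟪(ψ (j:ℕ) : H), z⟫ := by
      intro z
      rw [hasumdef]
      rw [sum_inner]
      simp [real_inner_smul_left]
    have hCa : C (asum s) = ∑ j : Fin N, (s j * lam (j:ℕ)) • (ψ (j:ℕ) : H) := by
      rw [hasumdef, map_sum]
      simp [_root_.map_smul, heig, smul_smul]
    have hv : (⟪C (asum s), asum s⟫ : ℝ) = ∑ j : Fin N, lam (j:ℕ) * (s j)^2 := by
      rw [hCa, hasumdef, sum_inner]
      simp only [real_inner_smul_left, horto.inner_right_fintype]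
      exact Finset.sum_congr rfl (fun j _ => by ring)
    have hvnn : 0 ≤ (⟪C (asum s), asum s⟫ : ℝ) := by
      rw [hv]
      exact Finset.sum_nonneg fun j _ => mul_nonneg (hlam _) (sq_nonneg _)
    have htn : (((⟪C (asum s), asum s⟫ : ℝ).toNNReal : ℝ)) = ∑ j : Fin N, lam (j:ℕ) * (s j)^2 := by
      rw [Real.coe_toNNReal _ hvnn, hv]
    have hsplit : ∀ y : H, F y s = Complex.exp (Complex.I * ((⟪asum s, x⟫ : ℝ) : ℂ))
        * (Complex.exp (Complex.I * (((-1:ℝ)) : ℂ) * ((⟪asum s, y⟫ : ℝ) : ℂ))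
          * Complex.exp (-((((1:ℝ)/(4*σ) : ℝ)) : ℂ) * ∑ j : Fin N, ((s j : ℝ) : ℂ)^2)) := by
      intro y
      simp only [hFdef]
      have hi : (⟪x - y, asum s⟫ : ℝ) = ⟪asum s, x⟫ - ⟪asum s, y⟫ := by
        rw [inner_sub_left, real_inner_comm x, real_inner_comm y]
      rw [hi]
      rw [show Complex.exp (Complex.I * ((⟪asum s, x⟫ - ⟪asum s, y⟫ : ℝ) : ℂ))
          = Complex.exp (Complex.I * ((⟪asum s, x⟫ : ℝ) : ℂ))
            * Complex.exp (Complex.I * (((-1:ℝ)) : ℂ) * ((⟪asum s, y⟫ : ℝ) : ℂ)) from by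
        rw [← Complex.exp_add]
        congr 1
        push_cast
        ring]
      rw [mul_assoc]
    calc ∫ y, F y s ∂P
        = Complex.exp (Complex.I * ((⟪asum s, x⟫ : ℝ) : ℂ))
          * ∫ y, (Complex.exp (Complex.I * (((-1:ℝ)) : ℂ) * ((⟪asum s, y⟫ : ℝ) : ℂ))
            * Complex.exp (-((((1:ℝ)/(4*σ) : ℝ)) : ℂ) * ∑ j : Fin N, ((s j : ℝ) : ℂ)^2)) ∂P := by
          simp_rw [hsplit]
          rw [integral_const_mul]
      _ = Complex.exp (Complex.I * ((⟪asum s, x⟫ : ℝ) : ℂ))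
          * ((∫ y, Complex.exp (Complex.I * (((-1:ℝ)) : ℂ) * ((⟪asum s, y⟫ : ℝ) : ℂ)) ∂P)
            * Complex.exp (-((((1:ℝ)/(4*σ) : ℝ)) : ℂ) * ∑ j : Fin N, ((s j : ℝ) : ℂ)^2)) := by
          rw [integral_mul_const]
      _ = Complex.exp (Complex.I * ((⟪asum s, x⟫ : ℝ) : ℂ))
          * ((Complex.exp (Complex.I * (((-1:ℝ)) : ℂ) * ((⟪asum s, μ⟫ : ℝ) : ℂ)
              - (((⟪C (asum s), asum s⟫ : ℝ).toNNReal : ℝ) : ℂ) * ((-1:ℝ)) ^ 2 / 2))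
            * Complex.exp (-((((1:ℝ)/(4*σ) : ℝ)) : ℂ) * ∑ j : Fin N, ((s j : ℝ) : ℂ)^2)) := by
          rw [charP P μ C hP (asum s) (-1)]
      _ = ∏ j : Fin N, (Complex.exp (Complex.I * (b (j:ℕ) : ℝ) * (s j))
          * Complex.exp (-((β (j:ℕ) : ℝ) : ℂ) * (s j)^2)) := by
          rw [Finset.prod_mul_distrib, ← Complex.exp_sum, ← Complex.exp_sum,
            ← Complex.exp_add, ← Complex.exp_add, ← Complex.exp_add]
          congr 1
          have e1 : ((⟪asum s, x⟫ : ℝ) : ℂ) - ((⟪asum s, μ⟫ : ℝ) : ℂ)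
              = ∑ j : Fin N, ((s j : ℝ) : ℂ) * ((b (j:ℕ) : ℝ) : ℂ) := by
            have er : (⟪asum s, x⟫ : ℝ) - ⟪asum s, μ⟫ = ∑ j : Fin N, s j * b (j:ℕ) := by
              rw [hax x, hax μ, ← Finset.sum_sub_distrib]
              refine Finset.sum_congr rfl (fun j _ => ?_)
              have hb1 : b (j:ℕ) = ⟪(ψ (j:ℕ) : H), x⟫ - ⟪(ψ (j:ℕ) : H), μ⟫ := by
                simp only [hbdef]
                rw [real_inner_comm, inner_sub_right]
              rw [hb1]
              ring
            calc ((⟪asum s, x⟫ : ℝ) : ℂ) - ((⟪asum s, μ⟫ : ℝ) : ℂ)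
                = (((⟪asum s, x⟫ - ⟪asum s, μ⟫ : ℝ)) : ℂ) := by push_cast; ring
              _ = ((∑ j : Fin N, s j * b (j:ℕ) : ℝ) : ℂ) := by rw [er]
              _ = ∑ j : Fin N, ((s j : ℝ) : ℂ) * ((b (j:ℕ) : ℝ) : ℂ) := by push_cast; ring
          have e2 : ((((⟪C (asum s), asum s⟫ : ℝ).toNNReal : ℝ)) : ℂ)
              = ∑ j : Fin N, ((lam (j:ℕ) : ℝ) : ℂ) * ((s j : ℝ) : ℂ)^2 := by
            rw [htn]
            push_cast
            ring
          have e3 : ∀ j : Fin N, ((β (j:ℕ) : ℝ) : ℂ)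
              = (((1:ℝ)/(4*σ) : ℝ) : ℂ) + ((lam (j:ℕ) : ℝ) : ℂ) / 2 := by
            intro j
            rw [hβdef]
            push_cast
            ring
          rw [e2]
          simp only [e3]
          have e4 : ∑ j : Fin N, (Complex.I * ((b (j:ℕ) : ℝ) : ℂ) * ((s j : ℝ) : ℂ))
              = Complex.I * ∑ j : Fin N, ((s j : ℝ) : ℂ) * ((b (j:ℕ) : ℝ) : ℂ) := by
            rw [Finset.mul_sum]
            exact Finset.sum_congr rfl fun j _ => by ring
          have e5 : ∑ j : Fin N, -((((1:ℝ)/(4*σ) : ℝ) : ℂ) + ((lam (j:ℕ) : ℝ) : ℂ)/2)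
                * ((s j : ℝ) : ℂ)^2
              = -((((1:ℝ)/(4*σ) : ℝ) : ℂ) * ∑ j : Fin N, ((s j : ℝ) : ℂ)^2)
                + (-1/2) * ∑ j : Fin N, ((lam (j:ℕ) : ℝ) : ℂ) * ((s j : ℝ) : ℂ)^2 := by
            rw [Finset.mul_sum, Finset.mul_sum, ← Finset.sum_neg_distrib, ← Finset.sum_add_distrib]
            exact Finset.sum_congr rfl fun j _ => by ring
          rw [e4, e5]
          linear_combination (norm := (push_cast; ring1)) Complex.I * e1
  -- Step D : outer integral
  have hD : ∫ s : Fin N → ℝ, ∏ j : Fin N, (Complex.exp (Complex.I * (b (j:ℕ) : ℝ) * (s j))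
          * Complex.exp (-((β (j:ℕ) : ℝ) : ℂ) * (s j)^2))
      = ∏ j : Fin N, ((Real.sqrt (π / β (j:ℕ)) : ℝ) : ℂ)
          * Complex.exp (-((b (j:ℕ) : ℝ) : ℂ)^2 / (4 * ((β (j:ℕ) : ℝ) : ℂ))) := by
    rw [volume_pi, integral_fintype_prod_eq_prod (μ := fun _ => volume)
      (f := fun (j : Fin N) (t : ℝ) => Complex.exp (Complex.I * ((b (j:ℕ) : ℝ) : ℂ) * (t : ℂ))
        * Complex.exp (-((β (j:ℕ) : ℝ) : ℂ) * (t : ℂ)^2))]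
    exact Finset.prod_congr rfl fun j _ => fourier_factor (hβpos _) (b (j:ℕ))
  -- assemble
  have hD1 : ∀ j : ℕ, (0:ℝ) < 1 + 2*σ*lam j := by
    intro j
    have h0 : (0:ℝ) ≤ 2*σ*lam j := by
      have := hlam j
      positivity
    linarith
  have hmain : ((∫ y, Real.exp (-σ * ∑ j ∈ Finset.range N, ⟪x - y, (ψ j : H)⟫ ^ 2) ∂P : ℝ) : ℂ)
      = ((K⁻¹ : ℝ) : ℂ)^N * ∫ s : Fin N → ℝ, ∫ y, F y s ∂P := by
    have hIR : ((∫ y, Real.exp (-σ * ∑ j ∈ Finset.range N, ⟪x - y, (ψ j : H)⟫ ^ 2) ∂P : ℝ) : ℂ)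
        = ∫ y, ((Real.exp (-σ * ∑ j ∈ Finset.range N, ⟪x - y, (ψ j : H)⟫ ^ 2) : ℝ) : ℂ) ∂P :=
      integral_ofReal.symm
    rw [hIR]
    simp_rw [hA]
    rw [integral_const_mul, MeasureTheory.integral_integral_swap hInt]
  have hfac : ∀ j : Fin N, ((K⁻¹ : ℝ) : ℂ)
        * (((Real.sqrt (π / β (j:ℕ)) : ℝ) : ℂ)
          * Complex.exp (-((b (j:ℕ) : ℝ) : ℂ)^2 / (4 * ((β (j:ℕ) : ℝ) : ℂ))))
      = ((Real.exp (-(σ/(1 + 2*σ*lam (j:ℕ)) * ⟪x - μ, (ψ (j:ℕ) : H)⟫^2)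
          - (1/2) * Real.log (1 + 2*σ*lam (j:ℕ))) : ℝ) : ℂ) := by
    intro j
    have hDpos := hD1 (j:ℕ)
    have hβj := hβpos (j:ℕ)
    have hsq : K⁻¹ * Real.sqrt (π / β (j:ℕ))
        = Real.exp (-((1:ℝ)/2) * Real.log (1 + 2*σ*lam (j:ℕ))) := by
      have h1 : π / β (j:ℕ) = (4*π*σ) / (1 + 2*σ*lam (j:ℕ)) := by
        have h0 : β (j:ℕ) = (1 + 2*σ*lam (j:ℕ))/(4*σ) := by
          simp only [hβdef]
          field_simp
          ring
        rw [h0, div_div_eq_mul_div]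
        congr 1
        ring
      rw [h1, Real.sqrt_div (by positivity) _, ← hKdef]
      have h2 : K⁻¹ * (K / Real.sqrt (1 + 2*σ*lam (j:ℕ)))
          = (Real.sqrt (1 + 2*σ*lam (j:ℕ)))⁻¹ := by
        field_simp
      rw [h2, Real.sqrt_eq_rpow, Real.rpow_def_of_pos hDpos, ← Real.exp_neg]
      congr 1
      ring
    have hexp2 : (-((b (j:ℕ) : ℝ) : ℂ)^2 / (4 * ((β (j:ℕ) : ℝ) : ℂ)))
        = ((-(σ/(1 + 2*σ*lam (j:ℕ)) * (b (j:ℕ))^2) : ℝ) : ℂ) := by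
      have h0 : β (j:ℕ) = (1 + 2*σ*lam (j:ℕ))/(4*σ) := by
        simp only [hβdef]
        field_simp
        ring
      rw [h0]
      have hne : ((1:ℂ) + 2*(σ:ℂ)*(lam (j:ℕ) : ℂ)) ≠ 0 := by
        have : ((1 + 2*σ*lam (j:ℕ) : ℝ) : ℂ) ≠ 0 := by exact_mod_cast ne_of_gt hDpos
        push_cast at this
        convert this using 2
      have hσC : (σ : ℂ) ≠ 0 := by exact_mod_cast ne_of_gt hσ
      push_cast
      field_simp
    calc ((K⁻¹ : ℝ) : ℂ) * (((Real.sqrt (π / β (j:ℕ)) : ℝ) : ℂ)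
            * Complex.exp (-((b (j:ℕ) : ℝ) : ℂ)^2 / (4 * ((β (j:ℕ) : ℝ) : ℂ))))
        = ((K⁻¹ * Real.sqrt (π / β (j:ℕ)) : ℝ) : ℂ)
            * Complex.exp (-((b (j:ℕ) : ℝ) : ℂ)^2 / (4 * ((β (j:ℕ) : ℝ) : ℂ))) := by
          push_cast
          ring
      _ = ((Real.exp (-((1:ℝ)/2) * Real.log (1 + 2*σ*lam (j:ℕ))) : ℝ) : ℂ)
            * ((Real.exp (-(σ/(1 + 2*σ*lam (j:ℕ)) * (b (j:ℕ))^2)) : ℝ) : ℂ) := by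
          rw [hsq, hexp2]
          push_cast
          ring
      _ = ((Real.exp (-(σ/(1 + 2*σ*lam (j:ℕ)) * ⟪x - μ, (ψ (j:ℕ) : H)⟫^2)
          - (1/2) * Real.log (1 + 2*σ*lam (j:ℕ))) : ℝ) : ℂ) := by
          rw [← Complex.ofReal_mul, ← Real.exp_add]
          norm_cast
          apply congrArg Real.exp
          simp only [hbdef]
          ring
  have final : ((∫ y, Real.exp (-σ * ∑ j ∈ Finset.range N, ⟪x - y, (ψ j : H)⟫ ^ 2) ∂P : ℝ) : ℂ)
      = ((Real.exp (-(∑ j ∈ Finset.range N, σ / (1 + 2*σ*lam j) * ⟪x - μ, (ψ j : H)⟫^2)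
        - (1/2) * ∑ j ∈ Finset.range N, Real.log (1 + 2*σ*lam j)) : ℝ) : ℂ) := by
    rw [hmain]
    simp_rw [hC]
    rw [hD]
    have hKN : ((K⁻¹ : ℝ) : ℂ)^N = ∏ _j : Fin N, ((K⁻¹ : ℝ) : ℂ) := by
      rw [Finset.prod_const, Finset.card_univ, Fintype.card_fin]
    rw [hKN, ← Finset.prod_mul_distrib]
    rw [Finset.prod_congr rfl (fun j _ => hfac j)]
    rw [← Complex.ofReal_prod, ← Real.exp_sum]
    norm_cast
    apply congrArg Real.exp
    rw [Finset.sum_sub_distrib]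
    congr 1
    · rw [← Fin.sum_univ_eq_sum_range
        (fun j => σ / (1 + 2*σ*lam j) * ⟪x - μ, (ψ j : H)⟫^2) N, ← Finset.sum_neg_distrib]
    · rw [← Fin.sum_univ_eq_sum_range
        (fun j => Real.log (1 + 2*σ*lam j)) N, Finset.mul_sum]
  exact_mod_cast final

theorem statement_18
    {H : Type*} [NormedAddCommGroup H] [InnerProductSpace ℝ H]
    [CompleteSpace H] [SecondCountableTopology H] [MeasurableSpace H] [BorelSpace H]
    (σ : ℝ) (hσ : 0 < σ)
    (P : Measure H) [IsProbabilityMeasure P]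
    (μ : H) (C : H →L[ℝ] H) (hP : IsGaussian P μ C)
    (ψ : HilbertBasis ℕ ℝ H) (lam : ℕ → ℝ)
    (hlam : ∀ j, 0 ≤ lam j) (hsum : Summable lam)
    (heig : ∀ j, C (ψ j) = lam j • ψ j) :
    (∀ x : H, Summable fun j => σ / (1 + 2 * σ * lam j) * ⟪x - μ, (ψ j : H)⟫ ^ 2) ∧
    (Summable fun j => Real.log (1 + 2 * σ * lam j)) ∧
    (∀ x : H,
      Real.log (∫ y, Real.exp (-σ * ‖x - y‖ ^ 2) ∂P)
        = -(∑' j, σ / (1 + 2 * σ * lam j) * ⟪x - μ, (ψ j : H)⟫ ^ 2)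
          - (1 / 2) * ∑' j, Real.log (1 + 2 * σ * lam j)) ∧
    (∀ (n : ℕ) (y : Fin n → H),
      Real.log (∫ z : Fin n → H, (∏ i, Real.exp (-σ * ‖y i - z i‖ ^ 2))
          ∂(Measure.pi fun _ : Fin n => P))
        = (∑ i, -(∑' j, σ / (1 + 2 * σ * lam j) * ⟪y i - μ, (ψ j : H)⟫ ^ 2))
          - (n : ℝ) / 2 * ∑' j, Real.log (1 + 2 * σ * lam j)) := by
  have hD1 : ∀ j : ℕ, (0:ℝ) < 1 + 2*σ*lam j := by
    intro j
    have h0 : (0:ℝ) ≤ 2*σ*lam j := by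
      have := hlam j
      positivity
    linarith
  have hPar : ∀ v : H, HasSum (fun j => ⟪v, (ψ j : H)⟫ ^ 2) (‖v‖^2) := by
    intro v
    have h := ψ.hasSum_inner_mul_inner v v
    have heq : ∀ i, ⟪v, (ψ i : H)⟫ * ⟪(ψ i : H), v⟫ = ⟪v, (ψ i : H)⟫ ^ 2 := by
      intro i
      rw [real_inner_comm (ψ i : H) v]
      ring
    simp_rw [heq, real_inner_self_eq_norm_sq] at h
    exact h
  have hS1 : ∀ x : H, Summable fun j => σ / (1 + 2 * σ * lam j) * ⟪x - μ, (ψ j : H)⟫ ^ 2 := by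
    intro x
    apply Summable.of_nonneg_of_le
      (fun j => mul_nonneg (div_nonneg hσ.le (hD1 j).le) (sq_nonneg _))
      (fun j => ?_) ((hPar (x - μ)).summable.mul_left σ)
    have h1le : (1:ℝ) ≤ 1 + 2*σ*lam j := by
      have h0 : (0:ℝ) ≤ 2*σ*lam j := by
        have := hlam j
        positivity
      linarith
    exact mul_le_mul_of_nonneg_right (div_le_self hσ.le h1le) (sq_nonneg _)
  have hS2 : Summable fun j => Real.log (1 + 2 * σ * lam j) := by
    apply Summable.of_nonneg_of_le
      (fun j => Real.log_nonneg (by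
        have h0 : (0:ℝ) ≤ 2*σ*lam j := by
          have := hlam j
          positivity
        linarith))
      (fun j => ?_) (hsum.mul_left (2*σ))
    have := Real.log_le_sub_one_of_pos (hD1 j)
    linarith
  have key : ∀ x : H, ∫ y, Real.exp (-σ * ‖x - y‖ ^ 2) ∂P
      = Real.exp (-(∑' j, σ / (1 + 2 * σ * lam j) * ⟪x - μ, (ψ j : H)⟫ ^ 2)
          - (1 / 2) * ∑' j, Real.log (1 + 2 * σ * lam j)) := by
    intro x
    have h1 : Tendsto (fun N => ∫ y, Real.exp (-σ * ∑ j ∈ Finset.range N, ⟪x - y, (ψ j : H)⟫ ^ 2) ∂P)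
        atTop (𝓝 (∫ y, Real.exp (-σ * ‖x - y‖ ^ 2) ∂P)) := by
      apply tendsto_integral_of_dominated_convergence (fun _ => (1:ℝ))
      · intro N
        apply Continuous.aestronglyMeasurable
        exact Real.continuous_exp.comp (continuous_const.mul (continuous_finset_sum _
          fun j _ => (Continuous.inner (continuous_const.sub continuous_id) continuous_const).pow 2))
      · exact integrable_const 1
      · intro N
        filter_upwards with yy
        rw [Real.norm_eq_abs, Real.abs_exp]
        apply Real.exp_le_one_iff.mpr
        have h0 : (0:ℝ) ≤ ∑ j ∈ Finset.range N, ⟪x - yy, (ψ j : H)⟫ ^ 2 :=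
          Finset.sum_nonneg fun j _ => sq_nonneg _
        nlinarith
      · filter_upwards with yy
        have hsumv := (hPar (x - yy)).tendsto_sum_nat
        have hmul : Tendsto (fun N => -σ * ∑ j ∈ Finset.range N, ⟪x - yy, (ψ j : H)⟫ ^ 2)
            atTop (𝓝 (-σ * ‖x - yy‖ ^ 2)) := hsumv.const_mul (-σ)
        exact Real.continuous_exp.continuousAt.tendsto.comp hmul
    have h2 : Tendsto (fun N => Real.exp
          (-(∑ j ∈ Finset.range N, σ / (1 + 2 * σ * lam j) * ⟪x - μ, (ψ j : H)⟫ ^ 2)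
            - (1 / 2) * ∑ j ∈ Finset.range N, Real.log (1 + 2 * σ * lam j)))
        atTop (𝓝 (Real.exp (-(∑' j, σ / (1 + 2 * σ * lam j) * ⟪x - μ, (ψ j : H)⟫ ^ 2)
          - (1 / 2) * ∑' j, Real.log (1 + 2 * σ * lam j)))) := by
      have t1 := ((hS1 x).hasSum.tendsto_sum_nat).neg
      have t2 := (hS2.hasSum.tendsto_sum_nat).const_mul ((1:ℝ)/2)
      exact Real.continuous_exp.continuousAt.tendsto.comp (t1.sub t2)
    have h3 : (fun N => ∫ y, Real.exp (-σ * ∑ j ∈ Finset.range N, ⟪x - y, (ψ j : H)⟫ ^ 2) ∂P)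
        = fun N => Real.exp
          (-(∑ j ∈ Finset.range N, σ / (1 + 2 * σ * lam j) * ⟪x - μ, (ψ j : H)⟫ ^ 2)
            - (1 / 2) * ∑ j ∈ Finset.range N, Real.log (1 + 2 * σ * lam j)) :=
      funext fun N => keyfin σ hσ P μ C hP ψ lam hlam heig x N
    rw [h3] at h1
    exact tendsto_nhds_unique h1 h2
  refine ⟨hS1, hS2, fun x => by rw [key x, Real.log_exp], ?_⟩
  intro n y
  have hpi : ∫ z : Fin n → H, (∏ i, Real.exp (-σ * ‖y i - z i‖ ^ 2))
        ∂(Measure.pi fun _ : Fin n => P)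
      = ∏ i, ∫ z, Real.exp (-σ * ‖y i - z‖ ^ 2) ∂P := by
    letI : MeasureSpace H := ⟨P⟩
    haveI : SigmaFinite (volume : Measure H) := (inferInstanceAs (SigmaFinite P))
    exact integral_fintype_prod_eq_prod (μ := fun _ => P) (fun i z => Real.exp (-σ * ‖y i - z‖ ^ 2))
  rw [hpi, Finset.prod_congr rfl (fun i _ => key (y i)), ← Real.exp_sum, Real.log_exp,
    Finset.sum_sub_distrib]
  congr 1
  rw [Finset.sum_const, Finset.card_univ, Fintype.card_fin, nsmul_eq_mul]
  ring
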